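/- Let X and Y be finite sets, u : X × Y → ℝ, and let γ be a probability distribution on X × Y with marginals ρ on X and φ on Y. If the support of γ is strictly u-cyclically monotone (i.e., for every finite collection of pairs (x_i, y_i), i = 1,…,N, in the support of γ such that the multiset {(x_i, y_i)} differs from {(x_i, y_{i+1})} (indices mod N), we have ∑_i u(x_i, y_i) > ∑_i u(x_i, y_{i+1})), then γ is the unique maximizer of ∫ u dγ' over all probability distributions γ' on X × Y with marginals ρ and φ. -/

import Mathlib

/-- γ is a probability distribution on a finite type. -/
def IsDist {Z : Type*} [Fintype Z] (γ : Z → ℝ) : Prop :=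
  (∀ z, 0 ≤ γ z) ∧ ∑ z, γ z = 1

/-- A set `S ⊆ X × Y` is strictly `u`-cyclically monotone: for any finite collection of
pairs in `S` whose multiset differs from the cyclically shifted one, the cyclic shift
strictly decreases total utility. -/
def StrictCycMono {X Y : Type*} (u : X → Y → ℝ) (S : Set (X × Y)) : Prop :=
  ∀ (N : ℕ) (x : Fin N → X) (y : Fin N → Y),
    (∀ i, (x i, y i) ∈ S) →
    ((List.ofFn fun i => (x i, y i)) : Multiset (X × Y)) ≠
      ((List.ofFn fun i => (x i, y (finRotate N i))) : Multiset (X × Y)) →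
    ∑ i, u (x i) (y (finRotate N i)) < ∑ i, u (x i) (y i)

open Finset
open scoped Classical

lemma exists_pos_of_sum_pos' {Z : Type*} [Fintype Z] {f : Z → ℝ}
    (h : 0 < ∑ z, f z) : ∃ z, 0 < f z := by
  by_contra hc
  push_neg at hc
  have h0 : ∑ z, f z ≤ 0 := Finset.sum_nonpos (fun z _ => hc z)
  linarith

lemma sum_ite_injective {Z : Type*} [DecidableEq Z] {N : ℕ} (f : Fin N → Z)
    (hf : Function.Injective f) (p : Z) [Decidable (∃ i, f i = p)] :
    (∑ i, if f i = p then (1 : ℝ) else 0) = if ∃ i, f i = p then 1 else 0 := by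
  by_cases h : ∃ i, f i = p
  · obtain ⟨j, hj⟩ := h
    rw [if_pos ⟨j, hj⟩]
    rw [Finset.sum_eq_single_of_mem j (Finset.mem_univ j)
      (fun i _ hij => if_neg (fun h' => hij (hf (h'.trans hj.symm))))]
    exact if_pos hj
  · rw [if_neg h]
    push_neg at h
    exact Finset.sum_eq_zero fun i _ => if_neg (h i)

noncomputable def suppc {X Y : Type*} [Fintype X] [Fintype Y] (α : X × Y → ℝ) : ℕ :=
  (Finset.univ.filter (fun p => 0 < α p)).card

lemma exists_cycle {X Y : Type*} [Fintype X] [Fintype Y]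
    (α β : X × Y → ℝ) (hα : ∀ p, 0 ≤ α p) (hβ : ∀ p, 0 ≤ β p)
    (hrow : ∀ x, ∑ y, α (x, y) = ∑ y, β (x, y))
    (hcol : ∀ y, ∑ x, α (x, y) = ∑ x, β (x, y))
    (hne : ∃ p, 0 < α p) :
    ∃ (N : ℕ) (x : Fin N → X) (y : Fin N → Y), 0 < N ∧ Function.Injective y ∧
      (∀ i, 0 < α (x i, y i)) ∧ ∀ i, 0 < β (x i, y (finRotate N i)) := by
  classical
  obtain ⟨p0, hp0⟩ := hne
  have hrow' : ∀ p : X × Y, 0 < α p → ∃ y', 0 < β (p.1, y') := by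
    intro p hp
    have h1 : α (p.1, p.2) ≤ ∑ y', α (p.1, y') :=
      Finset.single_le_sum (fun y' _ => hα (p.1, y')) (Finset.mem_univ p.2)
    have h2 : 0 < ∑ y', β (p.1, y') := by
      rw [← hrow]
      exact lt_of_lt_of_le (by simpa using hp) h1
    exact exists_pos_of_sum_pos' h2
  have hcol' : ∀ (x0 : X) (y0 : Y), 0 < β (x0, y0) → ∃ x', 0 < α (x', y0) := by
    intro x0 y0 hb
    have h1 : β (x0, y0) ≤ ∑ x', β (x', y0) :=
      Finset.single_le_sum (fun x' _ => hβ (x', y0)) (Finset.mem_univ x0)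
    have h2 : 0 < ∑ x', α (x', y0) := by rw [hcol]; linarith
    exact exists_pos_of_sum_pos' h2
  have hT : ∀ p : {p : X × Y // 0 < α p}, ∃ q : {p : X × Y // 0 < α p}, 0 < β (p.1.1, q.1.2) := by
    rintro ⟨p, hp⟩
    obtain ⟨y', hy'⟩ := hrow' p hp
    obtain ⟨x', hx'⟩ := hcol' p.1 y' hy'
    exact ⟨⟨(x', y'), hx'⟩, hy'⟩
  choose next hnext using hT
  set seq : ℕ → {p : X × Y // 0 < α p} := fun n => next^[n] ⟨p0, hp0⟩ with hseq
  have hlink : ∀ n, 0 < β ((seq n).1.1, (seq (n + 1)).1.2) := by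
    intro n
    have h : seq (n + 1) = next (seq n) := Function.iterate_succ_apply' next n _
    rw [h]
    exact hnext (seq n)
  set Ys : ℕ → Y := fun n => (seq n).1.2 with hYs
  have hPex : ∃ n, ∃ m, m < n ∧ Ys m = Ys n := by
    obtain ⟨a, b, hab, he⟩ := Finite.exists_ne_map_eq_of_infinite Ys
    rcases lt_or_gt_of_ne hab with h | h
    · exact ⟨b, a, h, he⟩
    · exact ⟨a, b, h, he.symm⟩
  obtain ⟨m, hmn, hym⟩ := Nat.find_spec hPex
  set n0 := Nat.find hPex with hn0
  obtain ⟨N', hN'⟩ : ∃ N', n0 - m = N' + 1 := ⟨n0 - m - 1, by omega⟩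
  have hinj : ∀ i j : Fin (N' + 1), i.val < j.val → Ys (m + i.val) ≠ Ys (m + j.val) := by
    intro i j hij hEq
    have hjlt : m + j.val < n0 := by omega
    exact Nat.find_min hPex hjlt ⟨m + i.val, by omega, hEq⟩
  refine ⟨N' + 1, fun i => (seq (m + i.val)).1.1, fun i => Ys (m + i.val), Nat.succ_pos _,
    ?_, ?_, ?_⟩
  · intro i j hij
    by_contra hne'
    rcases Ne.lt_or_gt (fun h : i.val = j.val => hne' (Fin.ext h)) with h | h
    · exact hinj i j h hij
    · exact hinj j i h hij.symm
  · intro i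
    simpa using (seq (m + i.val)).2
  · intro i
    have hr : Ys (m + (finRotate (N' + 1) i).val) = Ys (m + i.val + 1) := by
      rw [finRotate_succ_apply, Fin.val_add_one]
      by_cases hi : i = Fin.last N'
      · rw [if_pos hi]
        have h1 : m + ((i : Fin (N' + 1)).val) + 1 = n0 := by
          subst hi; simp [Fin.last]; omega
        rw [h1, ← hym]
        norm_num
      · rw [if_neg hi]
        ring_nf
    simp only [hr]
    exact hlink (m + i.val)

lemma step_lemma {X Y : Type*} [Fintype X] [Fintype Y]
    (u : X → Y → ℝ) (S : Set (X × Y)) (hS : StrictCycMono u S)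
    (α β : X × Y → ℝ) (hα : ∀ p, 0 ≤ α p) (hβ : ∀ p, 0 ≤ β p)
    (hd : ∀ p, 0 < α p → β p = 0)
    (hrow : ∀ x, ∑ y, α (x, y) = ∑ y, β (x, y))
    (hcol : ∀ y, ∑ x, α (x, y) = ∑ x, β (x, y))
    (hsupp : ∀ p, 0 < α p → p ∈ S)
    (hne : ∃ p, 0 < α p) :
    ∃ (α' β' : X × Y → ℝ) (ε A B : ℝ),
      (∀ p, 0 ≤ α' p) ∧ (∀ p, 0 ≤ β' p) ∧ (∀ p, 0 < α' p → β' p = 0) ∧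
      (∀ x, ∑ y, α' (x, y) = ∑ y, β' (x, y)) ∧
      (∀ y, ∑ x, α' (x, y) = ∑ x, β' (x, y)) ∧
      (∀ p, 0 < α' p → p ∈ S) ∧
      suppc α' + suppc β' < suppc α + suppc β ∧
      0 < ε ∧ B < A ∧
      (∑ p : X × Y, u p.1 p.2 * α p = ∑ p : X × Y, u p.1 p.2 * α' p + ε * A) ∧
      (∑ p : X × Y, u p.1 p.2 * β p = ∑ p : X × Y, u p.1 p.2 * β' p + ε * B) := by
  obtain ⟨N, x, y, hN, hyinj, hxy, hxy'⟩ := exists_cycle α β hα hβ hrow hcol hne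
  haveI : Nonempty (Fin N) := ⟨⟨0, hN⟩⟩
  have hpairinj : Function.Injective (fun i => ((x i, y i) : X × Y)) := by
    intro i j h
    exact hyinj (congrArg Prod.snd h)
  have hpairinj' : Function.Injective (fun i => ((x i, y (finRotate N i)) : X × Y)) := by
    intro i j h
    exact (finRotate N).injective (hyinj (congrArg Prod.snd h))
  set ε := Finset.univ.inf' Finset.univ_nonempty
      (fun i => min (α (x i, y i)) (β (x i, y (finRotate N i)))) with hεdef
  have hε : 0 < ε := by
    rw [Finset.lt_inf'_iff]
    intro i _
    exact lt_min (hxy i) (hxy' i)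
  have hεα : ∀ i, ε ≤ α (x i, y i) := fun i =>
    le_trans (Finset.inf'_le _ (Finset.mem_univ i)) (min_le_left _ _)
  have hεβ : ∀ i, ε ≤ β (x i, y (finRotate N i)) := fun i =>
    le_trans (Finset.inf'_le _ (Finset.mem_univ i)) (min_le_right _ _)
  set cα : X × Y → ℝ := fun p => if ∃ i, (x i, y i) = p then 1 else 0 with hcαdef
  set cβ : X × Y → ℝ := fun p => if ∃ i, (x i, y (finRotate N i)) = p then 1 else 0 with hcβdef
  have hcαsum : ∀ p, (∑ i, if (x i, y i) = p then (1 : ℝ) else 0) = cα p := fun p =>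
    sum_ite_injective _ hpairinj p
  have hcβsum : ∀ p, (∑ i, if (x i, y (finRotate N i)) = p then (1 : ℝ) else 0) = cβ p :=
    fun p => sum_ite_injective _ hpairinj' p
  have hcαnn : ∀ p, 0 ≤ cα p := by
    intro p
    by_cases h : ∃ i, (x i, y i) = p <;> simp [hcαdef, h]
  have hcβnn : ∀ p, 0 ≤ cβ p := by
    intro p
    by_cases h : ∃ i, (x i, y (finRotate N i)) = p <;> simp [hcβdef, h, -finRotate_apply]
  set α' : X × Y → ℝ := fun p => α p - ε * cα p with hα'def
  set β' : X × Y → ℝ := fun p => β p - ε * cβ p with hβ'def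
  have hα'le : ∀ p, α' p ≤ α p := by
    intro p
    have := mul_nonneg hε.le (hcαnn p)
    simp only [hα'def]
    linarith
  have hβ'le : ∀ p, β' p ≤ β p := by
    intro p
    have := mul_nonneg hε.le (hcβnn p)
    simp only [hβ'def]
    linarith
  have hα'nn : ∀ p, 0 ≤ α' p := by
    intro p
    simp only [hα'def, hcαdef]
    by_cases h : ∃ i, (x i, y i) = p
    · obtain ⟨i, hi⟩ := h
      have := hεα i
      rw [hi] at this
      rw [if_pos ⟨i, hi⟩]
      linarith
    · rw [if_neg h]
      have := hα p
      linarith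
  have hβ'nn : ∀ p, 0 ≤ β' p := by
    intro p
    simp only [hβ'def, hcβdef]
    by_cases h : ∃ i, (x i, y (finRotate N i)) = p
    · obtain ⟨i, hi⟩ := h
      have := hεβ i
      rw [hi] at this
      rw [if_pos ⟨i, hi⟩]
      linarith
    · rw [if_neg h]
      have := hβ p
      linarith
  have hα'pos : ∀ p, 0 < α' p → 0 < α p := fun p h => lt_of_lt_of_le h (hα'le p)
  have hβ'pos : ∀ p, 0 < β' p → 0 < β p := fun p h => lt_of_lt_of_le h (hβ'le p)
  -- marginals of cα, cβ
  have hcαrow : ∀ x0, ∑ y0, cα (x0, y0) = ∑ i, if x i = x0 then (1 : ℝ) else 0 := by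
    intro x0
    calc ∑ y0, cα (x0, y0) = ∑ y0, ∑ i, if (x i, y i) = (x0, y0) then (1 : ℝ) else 0 :=
          Finset.sum_congr rfl fun y0 _ => (hcαsum (x0, y0)).symm
      _ = ∑ i, ∑ y0, if (x i, y i) = (x0, y0) then (1 : ℝ) else 0 := Finset.sum_comm
      _ = ∑ i, if x i = x0 then (1 : ℝ) else 0 := by
          refine Finset.sum_congr rfl fun i _ => ?_
          by_cases hx : x i = x0
          · simp [Prod.ext_iff, hx]
          · simp [Prod.ext_iff, hx]
  have hcβrow : ∀ x0, ∑ y0, cβ (x0, y0) = ∑ i, if x i = x0 then (1 : ℝ) else 0 := by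
    intro x0
    calc ∑ y0, cβ (x0, y0)
        = ∑ y0, ∑ i, if (x i, y (finRotate N i)) = (x0, y0) then (1 : ℝ) else 0 :=
          Finset.sum_congr rfl fun y0 _ => (hcβsum (x0, y0)).symm
      _ = ∑ i, ∑ y0, if (x i, y (finRotate N i)) = (x0, y0) then (1 : ℝ) else 0 :=
          Finset.sum_comm
      _ = ∑ i, if x i = x0 then (1 : ℝ) else 0 := by
          refine Finset.sum_congr rfl fun i _ => ?_
          by_cases hx : x i = x0
          · simp [Prod.ext_iff, hx]
          · simp [Prod.ext_iff, hx]
  have hcαcol : ∀ y0, ∑ x0, cα (x0, y0) = ∑ i, if y i = y0 then (1 : ℝ) else 0 := by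
    intro y0
    calc ∑ x0, cα (x0, y0) = ∑ x0, ∑ i, if (x i, y i) = (x0, y0) then (1 : ℝ) else 0 :=
          Finset.sum_congr rfl fun x0 _ => (hcαsum (x0, y0)).symm
      _ = ∑ i, ∑ x0, if (x i, y i) = (x0, y0) then (1 : ℝ) else 0 := Finset.sum_comm
      _ = ∑ i, if y i = y0 then (1 : ℝ) else 0 := by
          refine Finset.sum_congr rfl fun i _ => ?_
          by_cases hy : y i = y0
          · simp [Prod.ext_iff, hy]
          · simp [Prod.ext_iff, hy]
  have hcβcol : ∀ y0, ∑ x0, cβ (x0, y0) = ∑ i, if y i = y0 then (1 : ℝ) else 0 := by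
    intro y0
    calc ∑ x0, cβ (x0, y0)
        = ∑ x0, ∑ i, if (x i, y (finRotate N i)) = (x0, y0) then (1 : ℝ) else 0 :=
          Finset.sum_congr rfl fun x0 _ => (hcβsum (x0, y0)).symm
      _ = ∑ i, ∑ x0, if (x i, y (finRotate N i)) = (x0, y0) then (1 : ℝ) else 0 :=
          Finset.sum_comm
      _ = ∑ i, if y (finRotate N i) = y0 then (1 : ℝ) else 0 := by
          refine Finset.sum_congr rfl fun i _ => ?_
          by_cases hy : y (finRotate N i) = y0
          · simp [Prod.ext_iff, hy, -finRotate_apply]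
          · simp [Prod.ext_iff, hy, -finRotate_apply]
      _ = ∑ i, if y i = y0 then (1 : ℝ) else 0 :=
          Equiv.sum_comp (finRotate N) (fun j => if y j = y0 then (1 : ℝ) else 0)
  -- utility sums
  set A := ∑ i, u (x i) (y i) with hAdef
  set B := ∑ i, u (x i) (y (finRotate N i)) with hBdef
  have hcαu : ∑ p : X × Y, u p.1 p.2 * cα p = A := by
    calc ∑ p : X × Y, u p.1 p.2 * cα p
        = ∑ p : X × Y, ∑ i, if (x i, y i) = p then u p.1 p.2 else 0 := by
          refine Finset.sum_congr rfl fun p _ => ?_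
          rw [← hcαsum p, Finset.mul_sum]
          refine Finset.sum_congr rfl fun i _ => ?_
          by_cases h : (x i, y i) = p <;> simp [h]
      _ = ∑ i, ∑ p : X × Y, if (x i, y i) = p then u p.1 p.2 else 0 := Finset.sum_comm
      _ = A := by
          refine Finset.sum_congr rfl fun i _ => ?_
          rw [Finset.sum_ite_eq Finset.univ ((x i, y i) : X × Y) (fun p => u p.1 p.2)]
          simp
  have hcβu : ∑ p : X × Y, u p.1 p.2 * cβ p = B := by
    calc ∑ p : X × Y, u p.1 p.2 * cβ p
        = ∑ p : X × Y, ∑ i, if (x i, y (finRotate N i)) = p then u p.1 p.2 else 0 := by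
          refine Finset.sum_congr rfl fun p _ => ?_
          rw [← hcβsum p, Finset.mul_sum]
          refine Finset.sum_congr rfl fun i _ => ?_
          by_cases h : (x i, y (finRotate N i)) = p <;> simp [h]
      _ = ∑ i, ∑ p : X × Y, if (x i, y (finRotate N i)) = p then u p.1 p.2 else 0 :=
          Finset.sum_comm
      _ = B := by
          refine Finset.sum_congr rfl fun i _ => ?_
          rw [Finset.sum_ite_eq Finset.univ ((x i, y (finRotate N i)) : X × Y)
            (fun p => u p.1 p.2)]
          simp
  have hBA : B < A := by
    refine hS N x y (fun i => hsupp _ (hxy i)) ?_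
    intro hms
    have he : ((x ⟨0, hN⟩, y ⟨0, hN⟩) : X × Y) ∈
        ((List.ofFn fun i => ((x i, y i) : X × Y)) : Multiset (X × Y)) := by
      rw [Multiset.mem_coe, List.mem_ofFn]
      exact ⟨⟨0, hN⟩, rfl⟩
    rw [hms, Multiset.mem_coe, List.mem_ofFn] at he
    obtain ⟨j, hj⟩ := he
    have hj' : ((x j, y (finRotate N j)) : X × Y) = (x ⟨0, hN⟩, y ⟨0, hN⟩) := hj
    have h1 : β (x ⟨0, hN⟩, y ⟨0, hN⟩) = 0 := hd _ (hxy ⟨0, hN⟩)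
    have h2 := hxy' j
    rw [hj'] at h2
    linarith
  refine ⟨α', β', ε, A, B, hα'nn, hβ'nn, ?_, ?_, ?_, ?_, ?_, hε, hBA, ?_, ?_⟩
  · intro p h
    have h1 : β p = 0 := hd p (hα'pos p h)
    have h2 := hβ'nn p
    have h3 := hβ'le p
    linarith
  · intro x0
    have h1 : ∑ y0, α' (x0, y0) = ∑ y0, α (x0, y0) - ε * ∑ y0, cα (x0, y0) := by
      rw [Finset.mul_sum, ← Finset.sum_sub_distrib]
    have h2 : ∑ y0, β' (x0, y0) = ∑ y0, β (x0, y0) - ε * ∑ y0, cβ (x0, y0) := by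
      rw [Finset.mul_sum, ← Finset.sum_sub_distrib]
    rw [h1, h2, hrow x0, hcαrow x0, hcβrow x0]
  · intro y0
    have h1 : ∑ x0, α' (x0, y0) = ∑ x0, α (x0, y0) - ε * ∑ x0, cα (x0, y0) := by
      rw [Finset.mul_sum, ← Finset.sum_sub_distrib]
    have h2 : ∑ x0, β' (x0, y0) = ∑ x0, β (x0, y0) - ε * ∑ x0, cβ (x0, y0) := by
      rw [Finset.mul_sum, ← Finset.sum_sub_distrib]
    rw [h1, h2, hcol y0, hcαcol y0, hcβcol y0]
  · intro p h
    exact hsupp p (hα'pos p h)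
  · -- card decrease
    obtain ⟨i0, -, hi0⟩ := Finset.exists_mem_eq_inf' (Finset.univ_nonempty)
      (fun i => min (α (x i, y i)) (β (x i, y (finRotate N i))))
    have hsubα : Finset.univ.filter (fun p => 0 < α' p) ⊆
        Finset.univ.filter (fun p => 0 < α p) := by
      intro p hp
      simp only [Finset.mem_filter, Finset.mem_univ, true_and] at hp ⊢
      exact hα'pos p hp
    have hsubβ : Finset.univ.filter (fun p => 0 < β' p) ⊆
        Finset.univ.filter (fun p => 0 < β p) := by
      intro p hp
      simp only [Finset.mem_filter, Finset.mem_univ, true_and] at hp ⊢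
      exact hβ'pos p hp
    rcases le_total (α (x i0, y i0)) (β (x i0, y (finRotate N i0))) with h | h
    · have hεeq : ε = α (x i0, y i0) := by rw [hεdef, hi0, min_eq_left h]
      have hq1 : α' (x i0, y i0) = 0 := by
        simp only [hα'def, hcαdef]
        rw [if_pos ⟨i0, rfl⟩]
        rw [hεeq]
        ring
      have hlt : suppc α' < suppc α := by
        refine Finset.card_lt_card ((Finset.ssubset_iff_of_subset hsubα).mpr
          ⟨(x i0, y i0), ?_, ?_⟩)
        · simp only [Finset.mem_filter, Finset.mem_univ, true_and]
          exact hxy i0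
        · simp only [Finset.mem_filter, Finset.mem_univ, true_and, not_lt]
          rw [hq1]
      have hle : suppc β' ≤ suppc β := Finset.card_le_card hsubβ
      unfold suppc
      unfold suppc at hlt hle
      omega
    · have hεeq : ε = β (x i0, y (finRotate N i0)) := by rw [hεdef, hi0, min_eq_right h]
      have hq1 : β' (x i0, y (finRotate N i0)) = 0 := by
        simp only [hβ'def, hcβdef]
        rw [if_pos ⟨i0, rfl⟩]
        rw [hεeq]
        ring
      have hlt : suppc β' < suppc β := by
        refine Finset.card_lt_card ((Finset.ssubset_iff_of_subset hsubβ).mpr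
          ⟨(x i0, y (finRotate N i0)), ?_, ?_⟩)
        · simp only [Finset.mem_filter, Finset.mem_univ, true_and]
          exact hxy' i0
        · simp only [Finset.mem_filter, Finset.mem_univ, true_and, not_lt]
          rw [hq1]
      have hle : suppc α' ≤ suppc α := Finset.card_le_card hsubα
      unfold suppc
      unfold suppc at hlt hle
      omega
  · have h1 : ∑ p : X × Y, u p.1 p.2 * α' p
        = ∑ p : X × Y, u p.1 p.2 * α p - ε * ∑ p : X × Y, u p.1 p.2 * cα p := by
      rw [Finset.mul_sum, ← Finset.sum_sub_distrib]
      refine Finset.sum_congr rfl fun p _ => ?_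
      simp only [hα'def]
      ring
    rw [h1, hcαu]
    ring
  · have h1 : ∑ p : X × Y, u p.1 p.2 * β' p
        = ∑ p : X × Y, u p.1 p.2 * β p - ε * ∑ p : X × Y, u p.1 p.2 * cβ p := by
      rw [Finset.mul_sum, ← Finset.sum_sub_distrib]
      refine Finset.sum_congr rfl fun p _ => ?_
      simp only [hβ'def]
      ring
    rw [h1, hcβu]
    ring

lemma le_lemma {X Y : Type*} [Fintype X] [Fintype Y]
    (u : X → Y → ℝ) (S : Set (X × Y)) (hS : StrictCycMono u S) :
    ∀ (n : ℕ) (α β : X × Y → ℝ), (∀ p, 0 ≤ α p) → (∀ p, 0 ≤ β p) →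
      (∀ p, 0 < α p → β p = 0) →
      (∀ x, ∑ y, α (x, y) = ∑ y, β (x, y)) →
      (∀ y, ∑ x, α (x, y) = ∑ x, β (x, y)) →
      (∀ p, 0 < α p → p ∈ S) →
      suppc α + suppc β ≤ n →
      ∑ p : X × Y, u p.1 p.2 * β p ≤ ∑ p : X × Y, u p.1 p.2 * α p := by
  intro n
  induction n using Nat.strong_induction_on with
  | _ n ih =>
    intro α β hα hβ hd hrow hcol hsupp hcard
    by_cases hne : ∃ p, 0 < α p
    · obtain ⟨α', β', ε, A, B, h1, h2, h3, h4, h5, h6, h7, h8, h9, h10, h11⟩ :=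
        step_lemma u S hS α β hα hβ hd hrow hcol hsupp hne
      have hih := ih (suppc α' + suppc β') (lt_of_lt_of_le h7 hcard)
        α' β' h1 h2 h3 h4 h5 h6 (le_refl _)
      have hAB : ε * B ≤ ε * A := mul_le_mul_of_nonneg_left h9.le h8.le
      linarith
    · push_neg at hne
      have hα0 : ∀ p, α p = 0 := fun p => le_antisymm (hne p) (hα p)
      have hβ0 : ∀ p, β p = 0 := by
        intro p
        have h1 : ∑ y0, β (p.1, y0) = 0 := by
          rw [← hrow]
          exact Finset.sum_eq_zero fun y0 _ => hα0 _
        have h2 := (Finset.sum_eq_zero_iff_of_nonneg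
          (fun y0 _ => hβ (p.1, y0))).mp h1 p.2 (Finset.mem_univ _)
        simpa using h2
      have e1 : ∑ p : X × Y, u p.1 p.2 * β p = 0 :=
        Finset.sum_eq_zero fun p _ => by rw [hβ0]; ring
      have e2 : ∑ p : X × Y, u p.1 p.2 * α p = 0 :=
        Finset.sum_eq_zero fun p _ => by rw [hα0]; ring
      rw [e1, e2]

lemma strict_lemma {X Y : Type*} [Fintype X] [Fintype Y]
    (u : X → Y → ℝ) (S : Set (X × Y)) (hS : StrictCycMono u S)
    (α β : X × Y → ℝ) (hα : ∀ p, 0 ≤ α p) (hβ : ∀ p, 0 ≤ β p)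
    (hd : ∀ p, 0 < α p → β p = 0)
    (hrow : ∀ x, ∑ y, α (x, y) = ∑ y, β (x, y))
    (hcol : ∀ y, ∑ x, α (x, y) = ∑ x, β (x, y))
    (hsupp : ∀ p, 0 < α p → p ∈ S)
    (hne : ∃ p, 0 < α p) :
    ∑ p : X × Y, u p.1 p.2 * β p < ∑ p : X × Y, u p.1 p.2 * α p := by
  obtain ⟨α', β', ε, A, B, h1, h2, h3, h4, h5, h6, h7, h8, h9, h10, h11⟩ :=
    step_lemma u S hS α β hα hβ hd hrow hcol hsupp hne
  have hle := le_lemma u S hS (suppc α' + suppc β') α' β' h1 h2 h3 h4 h5 h6 (le_refl _)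
  have hAB : ε * B < ε * A := by
    exact mul_lt_mul_of_pos_left h9 h8
  linarith

/-- If the support of γ is strictly u-cyclically monotone, then γ is the unique maximizer
of the optimal transport problem with marginals those of γ. -/
theorem stmt0 {X Y : Type*} [Fintype X] [Fintype Y]
    (u : X → Y → ℝ) (γ : X × Y → ℝ) (hγ : IsDist γ)
    (hS : StrictCycMono u {p : X × Y | 0 < γ p}) :
    ∀ γ' : X × Y → ℝ, IsDist γ' →
      (∀ x, ∑ y, γ' (x, y) = ∑ y, γ (x, y)) →
      (∀ y, ∑ x, γ' (x, y) = ∑ x, γ (x, y)) →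
      γ' ≠ γ →
      ∑ p : X × Y, u p.1 p.2 * γ' p < ∑ p : X × Y, u p.1 p.2 * γ p := by
  intro γ' hγ' hrowm hcolm hneq
  set α : X × Y → ℝ := fun p => max (γ p - γ' p) 0 with hαdef
  set β : X × Y → ℝ := fun p => max (γ' p - γ p) 0 with hβdef
  have hαnn : ∀ p, 0 ≤ α p := fun p => le_max_right _ _
  have hβnn : ∀ p, 0 ≤ β p := fun p => le_max_right _ _
  have hdiff : ∀ p, β p - α p = γ' p - γ p := by
    intro p
    simp only [hαdef, hβdef]
    rcases le_total (γ' p) (γ p) with h | h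
    · rw [max_eq_right (by linarith), max_eq_left (by linarith)]
      ring
    · rw [max_eq_left (by linarith), max_eq_right (by linarith)]
      ring
  have hαpos : ∀ p, 0 < α p → γ' p < γ p := by
    intro p hp
    by_contra hc
    push_neg at hc
    rw [hαdef] at hp
    simp only at hp
    rw [max_eq_right (by linarith)] at hp
    linarith
  have hβpos : ∀ p, 0 < β p → γ p < γ' p := by
    intro p hp
    by_contra hc
    push_neg at hc
    rw [hβdef] at hp
    simp only at hp
    rw [max_eq_right (by linarith)] at hp
    linarith
  have hd : ∀ p, 0 < α p → β p = 0 := by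
    intro p hp
    have := hαpos p hp
    simp only [hβdef]
    rw [max_eq_right (by linarith)]
  have hrow : ∀ x, ∑ y, α (x, y) = ∑ y, β (x, y) := by
    intro x0
    have h1 : ∑ y0, (β (x0, y0) - α (x0, y0)) = ∑ y0, (γ' (x0, y0) - γ (x0, y0)) :=
      Finset.sum_congr rfl fun y0 _ => hdiff (x0, y0)
    have h2 : ∑ y0, (γ' (x0, y0) - γ (x0, y0)) = 0 := by
      rw [Finset.sum_sub_distrib, hrowm x0]
      ring
    rw [Finset.sum_sub_distrib] at h1
    have h3 : ∑ y0, β (x0, y0) - ∑ y0, α (x0, y0) = 0 := by rw [h1, h2]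
    linarith
  have hcol : ∀ y, ∑ x, α (x, y) = ∑ x, β (x, y) := by
    intro y0
    have h1 : ∑ x0, (β (x0, y0) - α (x0, y0)) = ∑ x0, (γ' (x0, y0) - γ (x0, y0)) :=
      Finset.sum_congr rfl fun x0 _ => hdiff (x0, y0)
    have h2 : ∑ x0, (γ' (x0, y0) - γ (x0, y0)) = 0 := by
      rw [Finset.sum_sub_distrib, hcolm y0]
      ring
    rw [Finset.sum_sub_distrib] at h1
    have h3 : ∑ x0, β (x0, y0) - ∑ x0, α (x0, y0) = 0 := by rw [h1, h2]
    linarith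
  have hsupp : ∀ p, 0 < α p → p ∈ {p : X × Y | 0 < γ p} := by
    intro p hp
    have h1 := hαpos p hp
    have h2 := hγ'.1 p
    exact Set.mem_setOf.mpr (by linarith)
  have hne : ∃ p, 0 < α p := by
    obtain ⟨p, hp⟩ := Function.ne_iff.mp hneq
    rcases lt_or_gt_of_ne hp with h | h
    · -- γ' p < γ p
      exact ⟨p, by simp only [hαdef]; rw [max_eq_left (by linarith)]; linarith⟩
    · -- γ p < γ' p, so β p > 0, use row marginal
      have hb : 0 < β p := by
        simp only [hβdef]
        rw [max_eq_left (by linarith)]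
        linarith
      have h1 : β (p.1, p.2) ≤ ∑ y0, β (p.1, y0) :=
        Finset.single_le_sum (fun y0 _ => hβnn (p.1, y0)) (Finset.mem_univ p.2)
      have h2 : 0 < ∑ y0, α (p.1, y0) := by
        rw [hrow]
        have : β (p.1, p.2) = β p := by rw [Prod.mk.eta]
        linarith
      obtain ⟨y0, hy0⟩ := exists_pos_of_sum_pos' h2
      exact ⟨(p.1, y0), hy0⟩
  have key := strict_lemma u _ hS α β hαnn hβnn hd hrow hcol hsupp hne
  have hsum : ∑ p : X × Y, u p.1 p.2 * γ' p - ∑ p : X × Y, u p.1 p.2 * γ p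
      = ∑ p : X × Y, u p.1 p.2 * β p - ∑ p : X × Y, u p.1 p.2 * α p := by
    rw [← Finset.sum_sub_distrib, ← Finset.sum_sub_distrib]
    refine Finset.sum_congr rfl fun p _ => ?_
    rw [← mul_sub, ← mul_sub, ← hdiff p]
  linarith
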